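/- Let M be a field of characteristic ≠ 2, 3 and m ∈ M. The discriminant of X^3 - m*X^2 - (m+3)*X - 1 equals (m^2 + 3m + 9)^2. In particular, it is a square in M, and if the polynomial is irreducible over M its Galois group over M is cyclic of order 3. -/

import Mathlib

open Polynomial IntermediateField

theorem stmt9 {M : Type*} [Field M] (h2 : ringChar M ≠ 2) (h3 : ringChar M ≠ 3) (m : M) :
    ((-m) ^ 2 * (-(m + 3)) ^ 2 - 4 * (-(m + 3)) ^ 3 - 4 * (-m) ^ 3 * (-1)
        + 18 * (-m) * (-(m + 3)) * (-1) - 27 * (-1 : M) ^ 2 = (m ^ 2 + 3 * m + 9) ^ 2) ∧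
      IsSquare ((-m) ^ 2 * (-(m + 3)) ^ 2 - 4 * (-(m + 3)) ^ 3 - 4 * (-m) ^ 3 * (-1)
        + 18 * (-m) * (-(m + 3)) * (-1) - 27 * (-1 : M) ^ 2) ∧
      (Irreducible (X ^ 3 - C m * X ^ 2 - C (m + 3) * X - 1 : M[X]) →
        IsCyclic (X ^ 3 - C m * X ^ 2 - C (m + 3) * X - 1 : M[X]).Gal ∧
          Nat.card (X ^ 3 - C m * X ^ 2 - C (m + 3) * X - 1 : M[X]).Gal = 3) := by
  have key : ((-m) ^ 2 * (-(m + 3)) ^ 2 - 4 * (-(m + 3)) ^ 3 - 4 * (-m) ^ 3 * (-1)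
      + 18 * (-m) * (-(m + 3)) * (-1) - 27 * (-1 : M) ^ 2 = (m ^ 2 + 3 * m + 9) ^ 2) := by ring
  refine ⟨key, ?_, ?_⟩
  · rw [key]; exact ⟨m ^ 2 + 3 * m + 9, by ring⟩
  intro hirr
  set p : M[X] := X ^ 3 - C m * X ^ 2 - C (m + 3) * X - 1 with hp
  have h3' : (3 : M) ≠ 0 := by
    intro h
    have hd : ringChar M ∣ 3 := (ringChar.spec M 3).mp (by exact_mod_cast h)
    rcases Nat.prime_three.eq_one_or_self_of_dvd _ hd with h1 | h1
    · exact one_ne_zero (α := M) (by simpa using (ringChar.spec M 1).mpr (h1 ▸ dvd_rfl))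
    · exact h3 h1
  have hmonic : p.Monic := by rw [hp]; monicity!
  have hdeg : p.natDegree = 3 := by rw [hp]; compute_degree!
  have hpne : p ≠ 0 := hmonic.ne_zero
  have hder : p.derivative ≠ 0 := by
    intro h
    have hc2 : p.derivative.coeff 2 = 3 := by
      rw [hp]
      simp [derivative_sub, derivative_pow, coeff_sub]
    rw [h] at hc2
    simp at hc2
    exact h3' hc2.symm
  have hsep : p.Separable := (separable_iff_derivative_ne_zero hirr).mpr hder
  set K := p.SplittingField
  have hsplits : (p.map (algebraMap M K)).Splits := SplittingField.splits p
  have hdeg' : p.degree = 3 := by rw [hp]; compute_degree!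
  obtain ⟨r, hrr⟩ := hsplits.exists_eval_eq_zero (by rw [degree_map, hdeg']; norm_num)
  have hr : aeval r (X ^ 3 - C m * X ^ 2 - C (m + 3) * X - 1 : M[X]) = 0 := by
    rw [aeval_def, ← eval_map]; exact hrr
  set m' : K := algebraMap M K m with hm'
  have hm3 : algebraMap M K (m + 3) = m' + 3 := by rw [map_add, map_ofNat]
  have hr' : r ^ 3 - m' * r ^ 2 - (m' + 3) * r - 1 = 0 := by
    simpa [hm3, ← hm', map_ofNat] using hr
  have hr0 : r ≠ 0 := by
    intro h
    rw [h] at hr'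
    simp at hr'
  have hr1 : r + 1 ≠ 0 := by
    intro h
    have hrr1 : r = -1 := by linear_combination h
    rw [hrr1] at hr'
    exact one_ne_zero (α := K) (by linear_combination hr')
  obtain ⟨b, hb⟩ : ∃ b : K, b = -(r + 1)⁻¹ := ⟨_, rfl⟩
  obtain ⟨c, hc⟩ : ∃ c : K, c = -(r + 1) * r⁻¹ := ⟨_, rfl⟩
  have e_b : b * (r + 1) = -1 := by rw [hb, neg_mul, inv_mul_cancel₀ hr1]
  have e_c : c * r = -(r + 1) := by rw [hc, mul_assoc, inv_mul_cancel₀ hr0, mul_one]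
  have e_bc : (b * (r + 1)) * (c * r) = (-1 : K) * (-(r + 1)) := by rw [e_b, e_c]
  have hrr1 : r * (r + 1) ≠ 0 := mul_ne_zero hr0 hr1
  have h1 : r + b + c = m' := by
    apply mul_right_cancel₀ hrr1
    linear_combination hr' + r * e_b + (r + 1) * e_c
  have h2' : r * b + r * c + b * c = -(m' + 3) := by
    apply mul_right_cancel₀ hrr1
    linear_combination r ^ 2 * e_b + r * (r + 1) * e_c + e_bc - hr'
  have h3'' : r * b * c = 1 := by
    apply mul_right_cancel₀ hrr1
    linear_combination r * e_bc
  have hfac : p.map (algebraMap M K) = (X - C r) * (X - C b) * (X - C c) := by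
    have e1 : (C m' : K[X]) = C r + C b + C c := by rw [← h1]; simp
    have e2 : (C (m' + 3) : K[X]) = -(C r * C b + C r * C c + C b * C c) := by
      rw [show C r * C b + C r * C c + C b * C c = C (r * b + r * c + b * c) by simp, h2']
      simp
    have e3 : (1 : K[X]) = C r * C b * C c := by
      rw [show C r * C b * C c = C (r * b * c) by simp, h3'', map_one]
    calc p.map (algebraMap M K) = X ^ 3 - C m' * X ^ 2 - C (m' + 3) * X - 1 := by
          show Polynomial.map (algebraMap M K) (X ^ 3 - C m * X ^ 2 - C (m + 3) * X - 1) = _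
          simp [Polynomial.map_sub, Polynomial.map_add, Polynomial.map_mul,
            Polynomial.map_pow, hm3, hm', map_ofNat]
      _ = (X - C r) * (X - C b) * (X - C c) := by
          rw [e1, e2, e3]; ring
  have hrmem : r ∈ M⟮r⟯ := mem_adjoin_simple_self M r
  have hbmem : b ∈ M⟮r⟯ := by
    rw [hb]; exact neg_mem (inv_mem (add_mem hrmem (one_mem _)))
  have hcmem : c ∈ M⟮r⟯ := by
    rw [hc]; exact mul_mem (neg_mem (add_mem hrmem (one_mem _))) (inv_mem hrmem)
  have hsub : p.rootSet K ⊆ (M⟮r⟯ : IntermediateField M K) := by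
    intro s hs
    rw [mem_rootSet] at hs
    have hz : ((s - r) * (s - b)) * (s - c) = 0 := by
      have h0 := hs.2
      rw [aeval_def, ← eval_map, hfac] at h0
      simpa using h0
    rcases mul_eq_zero.mp hz with h | h
    · rcases mul_eq_zero.mp h with h | h
      · rw [sub_eq_zero.mp h]; exact hrmem
      · rw [sub_eq_zero.mp h]; exact hbmem
    · rw [sub_eq_zero.mp h]; exact hcmem
  have htop : (M⟮r⟯ : IntermediateField M K) = ⊤ := by
    rw [eq_top_iff]
    intro x _
    have hx : x ∈ Algebra.adjoin M (p.rootSet K) := by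
      rw [Polynomial.IsSplittingField.adjoin_rootSet K p]; trivial
    exact Algebra.adjoin_le
      (show p.rootSet K ⊆ (M⟮r⟯ : IntermediateField M K).toSubalgebra from hsub) hx
  have hint : IsIntegral M r := ⟨p, hmonic, by rwa [← aeval_def]⟩
  have hmin : minpoly M r = p := (minpoly.eq_of_irreducible_of_monic hirr hr hmonic).symm
  have hfin : Module.finrank M K = 3 := by
    rw [← IntermediateField.finrank_top', ← htop, IntermediateField.adjoin.finrank hint, hmin,
      hdeg]
  have hcard : Nat.card p.Gal = 3 := by
    rw [Polynomial.Gal.card_of_separable hsep, hfin]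
  haveI : Fact (Nat.Prime 3) := ⟨Nat.prime_three⟩
  exact ⟨isCyclic_of_prime_card (p := 3) hcard, hcard⟩
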